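/- Let M : ℝ → Matrix (Fin 8) (Fin 8) ℝ be continuous with M(s) ∈ M₂ for all s, and let η solve η' = M(s)η with η(0) having zero entries in coordinates 1, 4, 5, and 8. Then η(s) has zero entries in coordinates 1, 4, 5, 8 for all s. -/

import Mathlib

open Matrix

/-- The allowed nonzero positions (0-indexed) for the sparsity class `M`. -/
def allowPos (a b : ℕ) : Prop :=
  (a = 0 ∧ b = 0) ∨ (a = 0 ∧ b = 3) ∨ (a = 1 ∧ b = 1) ∨ (a = 1 ∧ b = 2) ∨
  (a = 2 ∧ b = 1) ∨ (a = 2 ∧ b = 2) ∨ (a = 3 ∧ b = 0) ∨ (a = 3 ∧ b = 3)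

/-- Membership in the class `M₂` of 8×8 real matrices: each of the four
4×4 blocks lies in the sparsity class `M`. -/
def inM2 (B : Matrix (Fin 8) (Fin 8) ℝ) : Prop :=
  ∀ i j : Fin 8, ¬ allowPos (i.val % 4) (j.val % 4) → B i j = 0

/-- The "bad" coordinate set: coordinates that must vanish. -/
def Sset (i : Fin 8) : Prop := i = 0 ∨ i = 3 ∨ i = 4 ∨ i = 7

instance : DecidablePred Sset := fun i => by unfold Sset; infer_instance

instance (a b : ℕ) : Decidable (allowPos a b) := by unfold allowPos; infer_instance

lemma sparsity_key : ∀ i j : Fin 8, Sset i → ¬ Sset j →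
    ¬ allowPos (i.val % 4) (j.val % 4) := by decide

theorem stmt9 (M : ℝ → Matrix (Fin 8) (Fin 8) ℝ) (hMcont : Continuous M)
    (hM : ∀ s, inM2 (M s))
    (η : ℝ → (Fin 8 → ℝ))
    (hode : ∀ s, HasDerivAt η (M s *ᵥ η s) s)
    (h0 : η 0 0 = 0 ∧ η 0 3 = 0 ∧ η 0 4 = 0 ∧ η 0 7 = 0) :
    ∀ s, η s 0 = 0 ∧ η s 3 = 0 ∧ η s 4 = 0 ∧ η s 7 = 0 := by
  classical
  intro s₁
  -- the projection of η onto the coordinates in `Sset`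
  set y : ℝ → Fin 8 → ℝ := fun s i => if Sset i then η s i else 0 with hy
  suffices hys : y s₁ = 0 by
    refine ⟨?_, ?_, ?_, ?_⟩
    · have := congrFun hys 0; simpa [hy, Sset] using this
    · have := congrFun hys 3; simpa [hy, Sset] using this
    · have := congrFun hys 4; simpa [hy, Sset] using this
    · have := congrFun hys 7; simpa [hy, Sset] using this
  -- interval
  set a : ℝ := -(|s₁| + 1) with ha
  set b : ℝ := |s₁| + 1 with hb
  have hab : a < b := by
    have : (0:ℝ) ≤ |s₁| := abs_nonneg _
    simp only [ha, hb]; linarith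
  have hs₁ : s₁ ∈ Set.Icc a b := by
    constructor
    · simp only [ha]; have := neg_abs_le s₁; linarith
    · simp only [hb]; have := le_abs_self s₁; linarith
  have h0mem : (0:ℝ) ∈ Set.Ioo a b := by
    constructor
    · simp only [ha]; have : (0:ℝ) ≤ |s₁| := abs_nonneg _; linarith
    · simp only [hb]; have : (0:ℝ) ≤ |s₁| := abs_nonneg _; linarith
  -- clamp function
  set c : ℝ → ℝ := fun t => max a (min b t) with hc
  have hcmem : ∀ t, c t ∈ Set.Icc a b := by
    intro t
    refine ⟨le_max_left _ _, max_le hab.le (min_le_left _ _)⟩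
  have hceq : ∀ t ∈ Set.Ioo a b, c t = t := by
    intro t ht
    simp only [hc]
    rw [min_eq_right ht.2.le, max_eq_right ht.1.le]
  have hccont : Continuous c := continuous_const.max (continuous_const.min continuous_id)
  -- bound on the entries of M on [a, b]
  have hgcont : Continuous fun t => ∑ i : Fin 8, ∑ j : Fin 8, |M t i j| := by
    refine continuous_finset_sum _ fun i _ => continuous_finset_sum _ fun j _ => ?_
    exact (((continuous_apply j).comp (continuous_apply i)).comp hMcont).abs
  obtain ⟨C, hC⟩ := (isCompact_Icc (a := a) (b := b)).exists_bound_of_continuousOn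
    hgcont.continuousOn
  set K : NNReal := Real.toNNReal C with hK
  have hCK : ∀ t, (∑ i : Fin 8, ∑ j : Fin 8, |M (c t) i j|) ≤ (K : ℝ) := by
    intro t
    have h1 := hC (c t) (hcmem t)
    have h2 : (∑ i : Fin 8, ∑ j : Fin 8, |M (c t) i j|)
        = ‖∑ i : Fin 8, ∑ j : Fin 8, |M (c t) i j|‖ := by
      rw [Real.norm_eq_abs, abs_of_nonneg]
      exact Finset.sum_nonneg fun i _ => Finset.sum_nonneg fun j _ => abs_nonneg _
    rw [h2]
    exact h1.trans (Real.le_coe_toNNReal C)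
  -- the vector field
  set v : ℝ → (Fin 8 → ℝ) → (Fin 8 → ℝ) :=
    fun t x i => if Sset i then (M (c t) *ᵥ x) i else 0 with hv
  -- Lipschitz bound
  have hlip : ∀ t, LipschitzWith K (v t) := by
    intro t
    refine LipschitzWith.of_dist_le_mul fun x z => ?_
    rw [dist_pi_le_iff (by positivity)]
    intro i
    simp only [hv]
    by_cases hi : Sset i
    · simp only [hi, if_pos]
      rw [Real.dist_eq, mulVec, mulVec, dotProduct, dotProduct, ← Finset.sum_sub_distrib]
      calc |∑ j : Fin 8, (M (c t) i j * x j - M (c t) i j * z j)|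
          ≤ ∑ j : Fin 8, |M (c t) i j * x j - M (c t) i j * z j| :=
            Finset.abs_sum_le_sum_abs _ _
        _ = ∑ j : Fin 8, |M (c t) i j| * |x j - z j| := by
            refine Finset.sum_congr rfl fun j _ => ?_
            rw [← mul_sub, abs_mul]
        _ ≤ ∑ j : Fin 8, |M (c t) i j| * dist x z := by
            refine Finset.sum_le_sum fun j _ => ?_
            refine mul_le_mul_of_nonneg_left ?_ (abs_nonneg _)
            rw [← Real.dist_eq]
            exact dist_le_pi_dist x z j
        _ = (∑ j : Fin 8, |M (c t) i j|) * dist x z := by rw [Finset.sum_mul]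
        _ ≤ (K : ℝ) * dist x z := by
            refine mul_le_mul_of_nonneg_right ?_ dist_nonneg
            refine le_trans ?_ (hCK t)
            exact Finset.single_le_sum
              (f := fun i => ∑ j : Fin 8, |M (c t) i j|)
              (fun i _ => Finset.sum_nonneg fun j _ => abs_nonneg _)
              (Finset.mem_univ i)
    · simp only [hi, if_neg, not_false_iff, dist_self]
      positivity
  -- derivative of y
  have hyderiv : ∀ t, HasDerivAt y (fun i => if Sset i then (M t *ᵥ η t) i else 0) t := by
    intro t
    rw [hasDerivAt_pi]
    intro i
    by_cases hi : Sset i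
    · simp only [hy, hi, if_pos]
      exact hasDerivAt_pi.mp (hode t) i
    · simp only [hy, hi, if_neg, not_false_iff]
      exact hasDerivAt_const t 0
  -- the projected derivative equals v applied to y
  have hkey : ∀ t, (fun i => if Sset i then (M t *ᵥ η t) i else 0)
      = fun i => if Sset i then (M t *ᵥ y t) i else 0 := by
    intro t
    funext i
    by_cases hi : Sset i
    · simp only [hi, if_pos]
      rw [mulVec, mulVec, dotProduct, dotProduct]
      refine Finset.sum_congr rfl fun j _ => ?_
      by_cases hj : Sset j
      · simp only [hy, hj, if_pos]
      · rw [hM t i j (sparsity_key i j hi hj)]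
        ring
    · simp only [hi, if_neg, not_false_iff]
  -- apply uniqueness of ODE solutions
  have huniq := ODE_solution_unique_of_mem_Icc (v := v) (s := fun _ => Set.univ)
    (K := K) (f := y) (g := fun _ => 0) (t₀ := (0:ℝ)) (a := a) (b := b)
    (fun t _ => (hlip t).lipschitzOnWith)
    h0mem
    (fun t _ => (hyderiv t).continuousAt.continuousWithinAt)
    (fun t ht => by
      have := hyderiv t
      rw [hkey t] at this
      convert this using 1
      show (fun i => if Sset i then (M (c t) *ᵥ y t) i else 0) = _
      rw [hceq t ht]
      all_goals rfl)
    (fun _ _ => Set.mem_univ _)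
    continuousOn_const
    (fun t _ => by
      have h0' : v t 0 = 0 := by
        funext i
        simp only [hv, mulVec_zero, Pi.zero_apply, ite_self]
      rw [h0']
      exact hasDerivAt_const t 0)
    (fun _ _ => Set.mem_univ _)
    (by
      funext i
      simp only [hy]
      by_cases hi : Sset i
      · simp only [hi, if_pos, Pi.zero_apply]
        rcases hi with h | h | h | h <;> subst h
        · exact h0.1
        · exact h0.2.1
        · exact h0.2.2.1
        · exact h0.2.2.2
      · simp [hi])
  exact huniq hs₁
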